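/- Let A : U → U be a self-adjoint endomorphism of an ℓ-dimensional real inner product space U, and let k ∈ {1,...,ℓ-1}. If for every k-dimensional subspace W ⊆ U the trace of the composition (orthogonal projection onto W) ∘ (A restricted to W) is at most k·λ, then there exists an (ℓ-k+1)-dimensional subspace V ⊆ U such that ⟨Av, v⟩ ≤ λ for every unit vector v ∈ V. -/

import Mathlib

open FiniteDimensional Module
open scoped RealInnerProductSpace

open Finset in
/-- Trace of `P_W ∘ f|_W` in terms of an orthonormal basis of `W`. -/
lemma trace_proj_comp_eq_sum {E : Type*} [NormedAddCommGroup E] [InnerProductSpace ℝ E]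
    [FiniteDimensional ℝ E]
    (f : E →ₗ[ℝ] E) (W : Submodule ℝ E) {ι : Type*} [Fintype ι] [DecidableEq ι]
    (b : OrthonormalBasis ι ℝ W) :
    LinearMap.trace ℝ W
        (((W.orthogonalProjectionOnto).toLinearMap).comp (f.comp W.subtype))
      = ∑ i, ⟪(b i : E), f (b i)⟫ := by
  rw [LinearMap.trace_eq_matrix_trace ℝ b.toBasis, Matrix.trace]
  refine Finset.sum_congr rfl fun i _ => ?_
  rw [Matrix.diag_apply, LinearMap.toMatrix_apply, b.coe_toBasis_repr_apply,
    b.repr_apply_apply]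
  simp only [LinearMap.coe_comp, ContinuousLinearMap.coe_coe, Function.comp_apply,
    Submodule.coe_subtype, b.coe_toBasis]
  rw [Submodule.inner_orthogonalProjectionOnto_eq_of_mem_left]

/-- If `A` is a self-adjoint endomorphism of an `ℓ`-dimensional real
inner product space `U`, `1 ≤ k ≤ ℓ - 1`, and for every `k`-dimensional subspace `W`
the trace of `P_W ∘ A|_W` is at most `k·λ`, then there is an `(ℓ - k + 1)`-dimensional
subspace `V` with `⟪A v, v⟫ ≤ λ` for every unit vector `v ∈ V`. -/
theorem stmt0 {U : Type*} [NormedAddCommGroup U] [InnerProductSpace ℝ U]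
    [FiniteDimensional ℝ U] (ℓ k : ℕ) (hU : Module.finrank ℝ U = ℓ)
    (hk : 1 ≤ k) (hkℓ : k ≤ ℓ - 1)
    (A : U →ₗ[ℝ] U) (hA : A.IsSymmetric) (lam : ℝ)
    (htr : ∀ W : Submodule ℝ U, Module.finrank ℝ W = k →
      LinearMap.trace ℝ W
        (((W.orthogonalProjectionOnto).toLinearMap).comp (A.comp W.subtype)) ≤ k * lam) :
    ∃ V : Submodule ℝ U, Module.finrank ℝ V = ℓ - k + 1 ∧
      ∀ v ∈ V, ‖v‖ = 1 → ⟪A v, v⟫ ≤ lam := by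
  classical
  have hkl : k + 1 ≤ ℓ := by omega
  set b := hA.eigenvectorBasis hU with hb
  set μ := hA.eigenvalues hU with hμ
  have hAb : ∀ i, A (b i) = μ i • b i := fun i => hA.apply_eigenvectorBasis hU i
  have hbb : ∀ i, ⟪b i, b i⟫ = (1 : ℝ) := fun i => by
    rw [real_inner_self_eq_norm_mul_norm, b.orthonormal.1 i, one_mul]
  -- the set of "bad" eigenvalue indices
  set S : Finset (Fin ℓ) := Finset.univ.filter (fun i => lam < μ i) with hS
  -- span of a finset of eigenvectors has dimension = its card
  have hdim : ∀ s : Finset (Fin ℓ),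
      Module.finrank ℝ (Submodule.span ℝ ((s.image b : Finset U) : Set U)) = s.card := by
    intro s
    have B := OrthonormalBasis.span b.orthonormal s
    rw [Module.finrank_eq_card_basis B.toBasis, Fintype.card_coe]
  have hScard : S.card < k := by
    by_contra h
    push_neg at h
    obtain ⟨s, hsS, hscard⟩ := Finset.exists_subset_card_eq h
    set W := Submodule.span ℝ ((s.image b : Finset U) : Set U) with hW
    have hWdim : Module.finrank ℝ W = k := by rw [hW, hdim, hscard]
    have htrW := htr W hWdim
    have hB := trace_proj_comp_eq_sum A W (OrthonormalBasis.span b.orthonormal s)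
    rw [hB] at htrW
    have hsum : ∑ i : s, ⟪((OrthonormalBasis.span b.orthonormal s) i : U),
        A ((OrthonormalBasis.span b.orthonormal s) i : U)⟫ = ∑ i : s, μ i := by
      refine Finset.sum_congr rfl fun i _ => ?_
      rw [OrthonormalBasis.span_apply, hAb, real_inner_smul_right, hbb, mul_one]
    rw [hsum] at htrW
    have hgt : (k : ℝ) * lam < ∑ i : s, μ (i : Fin ℓ) := by
      have : ∀ i : s, lam < μ (i : Fin ℓ) := by
        intro i
        have := hsS i.2
        rw [hS, Finset.mem_filter] at this
        exact this.2
      calc (k : ℝ) * lam = ∑ _i : s, lam := by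
            rw [Finset.sum_const, Finset.card_univ, Fintype.card_coe, hscard, nsmul_eq_mul]
        _ < ∑ i : s, μ (i : Fin ℓ) := by
            apply Finset.sum_lt_sum_of_nonempty
            · rw [Finset.univ_nonempty_iff, ← Fintype.card_pos_iff, Fintype.card_coe, hscard]
              omega
            · exact fun i _ => this i
    linarith
  -- choose the good indices
  have hcompl : ℓ - k + 1 ≤ Sᶜ.card := by
    have h1 : Sᶜ.card = ℓ - S.card := by
      rw [Finset.card_compl, Fintype.card_fin]
    omega
  obtain ⟨t, htS, htcard⟩ := Finset.exists_subset_card_eq hcompl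
  refine ⟨Submodule.span ℝ ((t.image b : Finset U) : Set U), by rw [hdim, htcard], ?_⟩
  intro v hv hnorm
  -- coordinates outside t vanish
  have hc0 : ∀ i ∉ t, ⟪b i, v⟫ = 0 := by
    clear hnorm
    intro i hi
    induction hv using Submodule.span_induction with
    | mem x hx =>
        rw [Finset.coe_image, Set.mem_image] at hx
        obtain ⟨j, hj, rfl⟩ := hx
        have : i ≠ j := fun h => hi (h ▸ hj)
        exact b.orthonormal.2 this
    | zero => exact inner_zero_right _
    | add x y _ _ hx hy => rw [inner_add_right, hx, hy, add_zero]
    | smul c x _ hx => rw [real_inner_smul_right, hx, mul_zero]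
  -- eigenvalues on t are ≤ lam
  have hμt : ∀ i ∈ t, μ i ≤ lam := by
    intro i hi
    have := htS hi
    rw [Finset.mem_compl, hS, Finset.mem_filter] at this
    push_neg at this
    exact this (Finset.mem_univ i)
  -- quadratic form in eigencoordinates
  have hquad : ⟪A v, v⟫ = ∑ i, μ i * (⟪b i, v⟫ * ⟪b i, v⟫) := by
    have h1 := b.sum_inner_mul_inner (A v) v
    rw [← h1]
    refine Finset.sum_congr rfl fun i _ => ?_
    rw [hA v (b i), hAb, real_inner_smul_right, real_inner_comm v (b i)]
    ring
  have hnorm2 : ∑ i, ⟪b i, v⟫ * ⟪b i, v⟫ = 1 := by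
    have h1 := b.sum_inner_mul_inner v v
    have h2 : ⟪v, v⟫ = (1 : ℝ) := by
      rw [real_inner_self_eq_norm_sq, hnorm]; norm_num
    rw [← h2, ← h1]
    exact Finset.sum_congr rfl fun i _ => by rw [real_inner_comm v (b i)]
  rw [hquad]
  calc ∑ i, μ i * (⟪b i, v⟫ * ⟪b i, v⟫)
      ≤ ∑ i, lam * (⟪b i, v⟫ * ⟪b i, v⟫) := by
        refine Finset.sum_le_sum fun i _ => ?_
        by_cases hi : i ∈ t
        · exact mul_le_mul_of_nonneg_right (hμt i hi) (mul_self_nonneg _)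
        · rw [hc0 i hi]; simp
    _ = lam := by rw [← Finset.mul_sum, hnorm2, mul_one]
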